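/- Two universe level expressions are equivalent under the equational theory (generated by associativity and commutativity of max, distribution of successor over max, max with successor idempotence l ⊔ S l ≃ S l, neutrality of 0, and idempotence of max) if and only if they have the same value under every assignment of natural numbers to their variables, where 0, S, and ⊔ are interpreted as zero, successor, and binary maximum on ℕ. -/
import Mathlib


/-- Universe level expressions: `l ::= i | 0 | S l | l ⊔ l'`. -/
inductive Lvl : Type
  | var : ℕ → Lvl
  | zero : Lvl
  | succ : Lvl → Lvl
  | max : Lvl → Lvl → Lvl
  deriving DecidableEq

namespace Lvl

/-- Interpretation of a level under an assignment `φ` of naturals to variables: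
`0`, `S` and `⊔` are interpreted as zero, successor and binary maximum on `ℕ`. -/
def eval (φ : ℕ → ℕ) : Lvl → ℕ
  | .var i => φ i
  | .zero => 0
  | .succ l => l.eval φ + 1
  | .max a b => Nat.max (a.eval φ) (b.eval φ)

end Lvl

/-- The equational theory of universe levels: the least congruence (closed under
contexts and under substitution, since the axioms are stated schematically for
arbitrary levels) generated by associativity and commutativity of `⊔`,
distribution of `S` over `⊔`, `l ⊔ S l ≃ S l`, `l ⊔ 0 ≃ l` and `l ⊔ l ≃ l`. -/
inductive LvlEq : Lvl → Lvl → Prop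
  | refl (l : Lvl) : LvlEq l l
  | symm {a b : Lvl} : LvlEq a b → LvlEq b a
  | trans {a b c : Lvl} : LvlEq a b → LvlEq b c → LvlEq a c
  | succ_congr {a b : Lvl} : LvlEq a b → LvlEq (.succ a) (.succ b)
  | max_congr {a b a' b' : Lvl} : LvlEq a b → LvlEq a' b' →
      LvlEq (.max a a') (.max b b')
  | max_assoc (a b c : Lvl) : LvlEq (.max a (.max b c)) (.max (.max a b) c)
  | max_comm (a b : Lvl) : LvlEq (.max a b) (.max b a)
  | succ_max (a b : Lvl) : LvlEq (.succ (.max a b)) (.max (.succ a) (.succ b))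
  | max_succ (a : Lvl) : LvlEq (.max a (.succ a)) (.succ a)
  | max_zero (a : Lvl) : LvlEq (.max a .zero) a
  | max_idem (a : Lvl) : LvlEq (.max a a) a

-- soundness
theorem lvlEq_sound {a b : Lvl} (h : LvlEq a b) (φ : ℕ → ℕ) : a.eval φ = b.eval φ := by
  induction h <;> simp_all [Lvl.eval, Nat.max_def] <;> split_ifs <;> omega

namespace LvlComplete

abbrev Atom := Option ℕ × ℕ

/-- The level `S^k x`. -/
def atomLvl (a : Atom) : Lvl :=
  Lvl.succ^[a.2] (match a.1 with | none => .zero | some i => .var i)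

def atomEval (φ : ℕ → ℕ) (a : Atom) : ℕ :=
  (match a.1 with | none => 0 | some i => φ i) + a.2

/-- Fold a list of atoms into a level by `max`. -/
def ofList : List Atom → Lvl
  | [] => .zero
  | [a] => atomLvl a
  | a :: b :: as => .max (atomLvl a) (ofList (b :: as))

def evalL (φ : ℕ → ℕ) (L : List Atom) : ℕ :=
  L.foldr (fun a n => Nat.max (atomEval φ a) n) 0

def norm : Lvl → List Atom
  | .var i => [(some i, 0)]
  | .zero => [(none, 0)]
  | .succ l => (norm l).map (fun a => (a.1, a.2 + 1))
  | .max a b => norm a ++ norm b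

lemma norm_ne_nil (l : Lvl) : norm l ≠ [] := by
  induction l <;> simp_all [norm]

lemma eval_iter_succ (φ : ℕ → ℕ) (k : ℕ) (l : Lvl) :
    (Lvl.succ^[k] l).eval φ = l.eval φ + k := by
  induction k with
  | zero => rfl
  | succ n ih => rw [Function.iterate_succ_apply']; simp [Lvl.eval, ih]; omega

lemma eval_atomLvl (φ : ℕ → ℕ) (a : Atom) : (atomLvl a).eval φ = atomEval φ a := by
  rcases a with ⟨x, k⟩
  rcases x <;> simp [atomLvl, atomEval, eval_iter_succ, Lvl.eval]

lemma eval_ofList (φ : ℕ → ℕ) : ∀ L, (ofList L).eval φ = evalL φ L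
  | [] => rfl
  | [a] => by simp [ofList, evalL, eval_atomLvl]
  | a :: b :: as => by
      have h := eval_ofList φ (b :: as)
      simp only [ofList, Lvl.eval, eval_atomLvl, h, evalL, List.foldr]

/-- `ofList (a :: as)` is always `LvlEq` to the explicit max. -/
lemma ofList_cons (a : Atom) (as : List Atom) :
    LvlEq (ofList (a :: as)) (.max (atomLvl a) (ofList as)) := by
  cases as with
  | nil => exact .symm (.max_zero _)
  | cons b bs => exact .refl _

lemma max_iter (k : ℕ) (a b : Lvl) :
    LvlEq (.max (Lvl.succ^[k] a) (Lvl.succ^[k] b)) (Lvl.succ^[k] (.max a b)) := by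
  induction k with
  | zero => exact .refl _
  | succ n ih =>
      rw [Function.iterate_succ_apply', Function.iterate_succ_apply',
        Function.iterate_succ_apply']
      exact .trans (.symm (.succ_max _ _)) (.succ_congr ih)

lemma absorb_iter (d : ℕ) (l : Lvl) :
    LvlEq (.max l (Lvl.succ^[d] l)) (Lvl.succ^[d] l) := by
  induction d generalizing l with
  | zero => exact .max_idem l
  | succ n ih =>
      rw [Function.iterate_succ_apply]
      refine .trans (.max_congr (.refl l) (.symm (ih l.succ))) ?_
      refine .trans (.max_assoc _ _ _) ?_
      exact .trans (.max_congr (.max_succ l) (.refl _)) (ih l.succ)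

def atomLE (a b : Atom) : Prop := (a.1 = b.1 ∨ a.1 = none) ∧ a.2 ≤ b.2

lemma iter_congr {a b : Lvl} (k : ℕ) (h : LvlEq a b) :
    LvlEq (Lvl.succ^[k] a) (Lvl.succ^[k] b) := by
  induction k with
  | zero => exact h
  | succ n ih =>
      rw [Function.iterate_succ_apply', Function.iterate_succ_apply']
      exact .succ_congr ih

lemma absorb_gen {k m : ℕ} (hk : k ≤ m) (A B : Lvl) (hAB : A = B ∨ A = Lvl.zero) :
    LvlEq (.max (Lvl.succ^[m] B) (Lvl.succ^[k] A)) (Lvl.succ^[m] B) := by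
  have hm : k + (m - k) = m := by omega
  rw [← hm, Function.iterate_add_apply]
  refine .trans (max_iter k _ _) (iter_congr k ?_)
  rcases hAB with rfl | rfl
  · exact .trans (.max_comm _ _) (absorb_iter _ _)
  · exact .max_zero _

lemma absorb_atom {a b : Atom} (h : atomLE a b) :
    LvlEq (.max (atomLvl b) (atomLvl a)) (atomLvl b) := by
  rcases a with ⟨x, k⟩; rcases b with ⟨y, m⟩
  obtain ⟨hx, hk⟩ := h
  simp only at hx hk
  refine absorb_gen hk _ _ ?_
  rcases hx with rfl | rfl
  · left; rfl
  · right; rfl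

lemma atomLvl_shift (a : Atom) : atomLvl (a.1, a.2 + 1) = .succ (atomLvl a) := by
  simp [atomLvl, Function.iterate_succ_apply']

lemma succ_ofList : ∀ (L : List Atom), L ≠ [] →
    LvlEq (.succ (ofList L)) (ofList (L.map (fun a => (a.1, a.2 + 1))))
  | [], h => absurd rfl h
  | [a], _ => by simp only [ofList, List.map, atomLvl_shift]; exact .refl _
  | a :: b :: bs, _ => by
      simp only [ofList, List.map]
      refine .trans (.succ_max _ _) (.max_congr ?_ ?_)
      · rw [← atomLvl_shift]; exact .refl _
      · have := succ_ofList (b :: bs) (by simp)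
        simpa using this

lemma ofList_append : ∀ (L M : List Atom), L ≠ [] → M ≠ [] →
    LvlEq (.max (ofList L) (ofList M)) (ofList (L ++ M))
  | [], _, h, _ => absurd rfl h
  | [a], M, _, hM => by
      simp only [List.cons_append, List.nil_append, ofList]
      exact .symm (ofList_cons a M)
  | a :: b :: bs, M, _, hM => by
      have ih := ofList_append (b :: bs) M (by simp) hM
      simp only [ofList, List.cons_append]
      refine .trans (.symm (.max_assoc _ _ _)) ?_
      refine .trans (.max_congr (.refl _) ih) ?_
      have : (b :: bs) ++ M = b :: (bs ++ M) := rfl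
      rw [this]
      exact .refl _

lemma norm_correct (l : Lvl) : LvlEq l (ofList (norm l)) := by
  induction l with
  | var i => exact .refl _
  | zero => exact .refl _
  | succ a ih =>
      exact .trans (.succ_congr ih) (succ_ofList _ (norm_ne_nil a))
  | max a b iha ihb =>
      exact .trans (.max_congr iha ihb)
        (ofList_append _ _ (norm_ne_nil a) (norm_ne_nil b))

lemma max_swap (p q r : Lvl) :
    LvlEq (.max (.max p q) r) (.max (.max p r) q) := by
  refine .trans (.symm (.max_assoc _ _ _)) ?_
  refine .trans (.max_congr (.refl p) (.max_comm q r)) (.max_assoc _ _ _)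

lemma absorb_one : ∀ (M : List Atom) (a : Atom), (∃ b ∈ M, atomLE a b) →
    LvlEq (.max (ofList M) (atomLvl a)) (ofList M)
  | [], a, h => by simp at h
  | b :: bs, a, h => by
      rcases h with ⟨b', hb', hle⟩
      rcases List.mem_cons.mp hb' with rfl | hmem
      · refine .trans (.max_congr (ofList_cons b' bs) (.refl _)) ?_
        refine .trans (max_swap _ _ _) ?_
        refine .trans (.max_congr (absorb_atom hle) (.refl _)) ?_
        exact .symm (ofList_cons b' bs)
      · have ih := absorb_one bs a ⟨b', hmem, hle⟩
        refine .trans (.max_congr (ofList_cons b bs) (.refl _)) ?_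
        refine .trans (.symm (.max_assoc _ _ _)) ?_
        refine .trans (.max_congr (.refl _) ih) ?_
        exact .symm (ofList_cons b bs)

lemma absorb_list : ∀ (L M : List Atom), (∀ a ∈ L, ∃ b ∈ M, atomLE a b) →
    LvlEq (.max (ofList M) (ofList L)) (ofList M)
  | [], M, _ => .max_zero _
  | a :: as, M, h => by
      have h1 : ∃ b ∈ M, atomLE a b := h a (by simp)
      have ih := absorb_list as M (fun x hx => h x (by simp [hx]))
      refine .trans (.max_congr (.refl _) (ofList_cons a as)) ?_
      refine .trans (.max_assoc _ _ _) ?_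
      exact .trans (.max_congr (absorb_one M a h1) (.refl _)) ih

lemma evalL_mem_le {φ : ℕ → ℕ} {a : Atom} : ∀ {L : List Atom}, a ∈ L →
    atomEval φ a ≤ evalL φ L := by
  intro L h
  induction L with
  | nil => simp at h
  | cons b bs ih =>
      rcases List.mem_cons.mp h with rfl | hmem
      · simp [evalL] <;> omega
      · have := ih hmem
        simp [evalL] at this ⊢
        omega

lemma exists_ge_of_evalL {φ : ℕ → ℕ} {v : ℕ} (hv : 0 < v) :
    ∀ {L : List Atom}, v ≤ evalL φ L → ∃ b ∈ L, v ≤ atomEval φ b := by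
  intro L h
  induction L with
  | nil => simp [evalL] at h; omega
  | cons b bs ih =>
      simp only [evalL, List.foldr] at h
      rcases le_or_gt v (atomEval φ b) with hb | hb
      · exact ⟨b, by simp, hb⟩
      · have : v ≤ evalL φ bs := by
          simp [evalL] at h ⊢
          omega
        obtain ⟨c, hc, hvc⟩ := ih this
        exact ⟨c, by simp [hc], hvc⟩

def maxOff (M : List Atom) : ℕ := M.foldr (fun a n => Nat.max a.2 n) 0

lemma offset_le {b : Atom} : ∀ {M : List Atom}, b ∈ M → b.2 ≤ maxOff M := by
  intro M h
  induction M with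
  | nil => simp at h
  | cons c cs ih =>
      rcases List.mem_cons.mp h with rfl | hmem
      · simp [maxOff] <;> omega
      · have := ih hmem
        simp [maxOff] at this ⊢
        omega

lemma domination {L M : List Atom} (hM : M ≠ [])
    (h : ∀ φ, evalL φ L = evalL φ M) :
    ∀ a ∈ L, ∃ b ∈ M, atomLE a b := by
  rintro ⟨x, k⟩ ha
  rcases x with _ | i
  · -- constant atom
    rcases Nat.eq_zero_or_pos k with rfl | hk
    · obtain ⟨b, hb⟩ := List.exists_mem_of_ne_nil M hM
      exact ⟨b, hb, Or.inr rfl, Nat.zero_le _⟩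
    · have h1 : k ≤ evalL (fun _ => 0) L := by
        have := evalL_mem_le (φ := fun _ => 0) ha
        simpa [atomEval] using this
      rw [h] at h1
      obtain ⟨⟨y, m⟩, hbm, hv⟩ := exists_ge_of_evalL hk h1
      have : atomEval (fun _ => 0) (y, m) = m := by
        rcases y <;> simp [atomEval]
      rw [this] at hv
      exact ⟨(y, m), hbm, Or.inr rfl, hv⟩
  · -- variable atom
    set N := maxOff M + 1 with hN
    set φ : ℕ → ℕ := fun j => if j = i then N else 0 with hφ
    have h1 : N + k ≤ evalL φ L := by
      have := evalL_mem_le (φ := φ) ha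
      simpa [atomEval, hφ] using this
    rw [h] at h1
    obtain ⟨⟨y, m⟩, hbm, hv⟩ := exists_ge_of_evalL (by omega) h1
    have hmle : m ≤ maxOff M := offset_le hbm
    rcases y with _ | j
    · simp [atomEval] at hv; omega
    · by_cases hji : j = i
      · subst hji
        simp [atomEval, hφ] at hv
        exact ⟨(some j, m), hbm, Or.inl rfl, by omega⟩
      · simp [atomEval, hφ, hji] at hv
        omega

end LvlComplete


/-- Two universe level expressions are equivalent under the equational theory iff
they have the same value under every assignment of naturals to their variables. -/
theorem lvlEq_iff_semantic (l l' : Lvl) :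
    LvlEq l l' ↔ ∀ φ : ℕ → ℕ, l.eval φ = l'.eval φ := by

  constructor
  · exact fun h φ => lvlEq_sound h φ
  · intro h
    have hL := LvlComplete.norm_correct l
    have hM := LvlComplete.norm_correct l'
    have he : ∀ φ, LvlComplete.evalL φ (LvlComplete.norm l)
        = LvlComplete.evalL φ (LvlComplete.norm l') := by
      intro φ
      rw [← LvlComplete.eval_ofList, ← LvlComplete.eval_ofList,
        ← lvlEq_sound hL, ← lvlEq_sound hM]
      exact h φ
    have d1 := LvlComplete.domination (LvlComplete.norm_ne_nil l') he
    have d2 := LvlComplete.domination (LvlComplete.norm_ne_nil l)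
      (fun φ => (he φ).symm)
    have h1 := LvlComplete.absorb_list _ _ d1
    have h2 := LvlComplete.absorb_list _ _ d2
    refine .trans hL (.trans ?_ (.symm hM))
    refine .trans (.symm h2) (.trans (.max_comm _ _) h1)
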